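/- Let z be a standard Gaussian random vector in R^p with p ≥ 2 and let Σ be a p×p positive semi-definite matrix. Then E[(zᵀ Σ z)²/(zᵀ z)²] ≤ tr(Σ²)/p + (tr Σ)²/(p(p−1)). -/

import Mathlib

open MeasureTheory ProbabilityTheory Matrix

/-- The standard Gaussian measure on `ℝ^p` (i.i.d. `N(0,1)` coordinates). -/
noncomputable def stdGaussian (p : ℕ) : Measure (Fin p → ℝ) :=
  Measure.pi fun _ => gaussianReal 0 1

namespace GQAux

variable {p : ℕ}

instance : IsProbabilityMeasure (stdGaussian p) := by
  unfold _root_.stdGaussian; infer_instance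

lemma gaussNeg : MeasurePreserving (fun t : ℝ => -t) (gaussianReal 0 1) (gaussianReal 0 1) := by
  refine ⟨measurable_neg, ?_⟩
  have h := gaussianReal_map_const_mul (μ := 0) (v := 1) (-1)
  have h2 : (fun t : ℝ => -t) = ((-1 : ℝ) * ·) := by funext t; simp
  rw [h2, h]
  norm_num

lemma measQ : Measurable (fun x : Fin p → ℝ => ∑ k, x k * x k) :=
  Finset.measurable_sum _ (fun k _ => (measurable_pi_apply k).mul (measurable_pi_apply k))

lemma measF (i j : Fin p) :
    Measurable (fun x : Fin p → ℝ => x i * x j / ∑ k, x k * x k) :=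
  ((measurable_pi_apply i).mul (measurable_pi_apply j)).div measQ

lemma boundF (i j : Fin p) (x : Fin p → ℝ) :
    |x i * x j / ∑ k, x k * x k| ≤ 1 := by
  set q := ∑ k, x k * x k with hq
  have hq0 : 0 ≤ q := Finset.sum_nonneg fun k _ => mul_self_nonneg _
  rcases eq_or_lt_of_le hq0 with h | h
  · simp [← h]
  · rw [abs_div, abs_of_pos h, div_le_one h]
    have h1 : x i * x i ≤ q := Finset.single_le_sum (f := fun k => x k * x k)
      (fun k _ => mul_self_nonneg _) (Finset.mem_univ i)
    have h2 : x j * x j ≤ q := Finset.single_le_sum (f := fun k => x k * x k)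
      (fun k _ => mul_self_nonneg _) (Finset.mem_univ j)
    nlinarith [abs_nonneg (x i * x j), sq_abs (x i * x j), sq_nonneg (|x i * x j| - q)]

lemma intF (i j : Fin p) :
    Integrable (fun x : Fin p → ℝ => x i * x j / ∑ k, x k * x k) (stdGaussian p) := by
  refine ⟨(measF i j).aestronglyMeasurable, ?_⟩
  exact HasFiniteIntegral.of_bounded (C := 1) (ae_of_all _ fun x => by
    rw [Real.norm_eq_abs]; exact boundF i j x)

lemma offdiag {i j : Fin p} (hij : i ≠ j) :
    ∫ x, x i * x j / ∑ k, x k * x k ∂(stdGaussian p) = 0 := by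
  classical
  set g : (Fin p → ℝ) → ℝ := fun x => x i * x j / ∑ k, x k * x k with hg
  set T : (Fin p → ℝ) → (Fin p → ℝ) :=
    fun a k => (if k = i then Neg.neg else id) (a k) with hT
  have hTmp : MeasurePreserving T (stdGaussian p) (stdGaussian p) :=
    measurePreserving_pi _ _ (fun k => by
      by_cases hk : k = i
      · simpa [hk] using gaussNeg
      · simpa [hk] using MeasurePreserving.id (gaussianReal 0 1))
  have key : ∫ x, g x ∂(stdGaussian p) = ∫ x, g (T x) ∂(stdGaussian p) := by
    rw [← integral_map hTmp.measurable.aemeasurable]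
    · rw [hTmp.map_eq]
    · rw [hTmp.map_eq]; exact (measF i j).aestronglyMeasurable
  have hgt : ∀ x, g (T x) = -g x := by
    intro x
    have hsum : ∑ k, T x k * T x k = ∑ k, x k * x k := by
      refine Finset.sum_congr rfl fun k _ => ?_
      by_cases hk : k = i <;> simp [T, hk]
    have hTi : T x i = -(x i) := by simp [T]
    have hTj : T x j = x j := by simp [T, hij.symm]
    simp only [g, hsum, hTi, hTj, neg_mul, neg_div]
  have key2 : ∫ x, g x ∂(stdGaussian p) = - ∫ x, g x ∂(stdGaussian p) := by
    calc ∫ x, g x ∂(stdGaussian p) = ∫ x, g (T x) ∂(stdGaussian p) := key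
      _ = ∫ x, -g x ∂(stdGaussian p) := by simp only [hgt]
      _ = - ∫ x, g x ∂(stdGaussian p) := integral_neg g
  linarith

lemma diag_eq (i j : Fin p) :
    ∫ x, x i * x i / ∑ k, x k * x k ∂(stdGaussian p)
      = ∫ x, x j * x j / ∑ k, x k * x k ∂(stdGaussian p) := by
  classical
  set σ := Equiv.swap i j with hσ
  set T := MeasurableEquiv.arrowCongr' (α₁ := Fin p) (α₂ := Fin p) σ (MeasurableEquiv.refl ℝ) with hT
  have hTmp : MeasurePreserving T (stdGaussian p) (stdGaussian p) := by
    exact measurePreserving_arrowCongr' (fun _ => gaussianReal 0 1) (fun _ => gaussianReal 0 1)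
      σ (MeasurableEquiv.refl ℝ) (fun _ => MeasurePreserving.id _)
  have hTx : ∀ (x : Fin p → ℝ) (k : Fin p), T x k = x (σ.symm k) := fun x k => rfl
  set g : (Fin p → ℝ) → ℝ := fun y => y i * y i / ∑ k, y k * y k with hg
  have key : ∫ x, g x ∂(stdGaussian p) = ∫ x, g (T x) ∂(stdGaussian p) := by
    rw [← integral_map hTmp.measurable.aemeasurable]
    · rw [hTmp.map_eq]
    · rw [hTmp.map_eq]; exact (measF i i).aestronglyMeasurable
  rw [key]
  congr 1
  funext x
  have hsum : ∑ k, (T x) k * (T x) k = ∑ k, x k * x k := by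
    simp only [hTx]
    exact Equiv.sum_comp σ.symm (fun k => x k * x k)
  have hi : T x i = x j := by rw [hTx]; simp [σ, Equiv.symm_swap, Equiv.swap_apply_left]
  simp only [g, hsum, hi]

lemma q_ne_zero_ae (hp : 0 < p) :
    ∀ᵐ x ∂(stdGaussian p), ∑ k, x k * x k ≠ 0 := by
  classical
  have : Nonempty (Fin p) := ⟨⟨0, hp⟩⟩
  set i0 : Fin p := ⟨0, hp⟩
  have hsub : {x : Fin p → ℝ | ∑ k, x k * x k = 0} ⊆ {x | x i0 = 0} := by
    intro x hx
    have := (Finset.sum_eq_zero_iff_of_nonneg (fun k _ => mul_self_nonneg (x k))).mp hx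
      i0 (Finset.mem_univ _)
    exact mul_self_eq_zero.mp this
  have hnull : stdGaussian p {x | x i0 = 0} = 0 := by
    have hset : {x : Fin p → ℝ | x i0 = 0}
        = Set.pi Set.univ (fun k => if k = i0 then ({0} : Set ℝ) else Set.univ) := by
      ext x
      simp only [Set.mem_setOf_eq, Set.mem_pi, Set.mem_univ, forall_true_left]
      constructor
      · intro h k; by_cases hk : k = i0 <;> simp [hk, h]
      · intro h; have := h i0; simpa using this
    rw [hset]
    unfold _root_.stdGaussian
    rw [Measure.pi_pi]
    refine Finset.prod_eq_zero (Finset.mem_univ i0) ?_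
    simp only [if_pos rfl]
    exact gaussianReal_absolutelyContinuous 0 one_ne_zero Real.volume_singleton
  refine measure_mono_null (fun x hx => ?_) hnull
  simp only [Set.mem_compl_iff, Set.mem_setOf_eq, not_not] at hx ⊢
  exact hsub hx

lemma diag (hp : 0 < p) (i : Fin p) :
    ∫ x, x i * x i / ∑ k, x k * x k ∂(stdGaussian p) = 1 / p := by
  classical
  set c := ∫ x, x i * x i / ∑ k, x k * x k ∂(stdGaussian p) with hc
  have hsum : ∑ j : Fin p, (∫ x, x j * x j / ∑ k, x k * x k ∂(stdGaussian p)) = 1 := by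
    rw [← integral_finset_sum _ (fun j _ => intF j j)]
    have hae : (fun x : Fin p → ℝ => ∑ j, x j * x j / ∑ k, x k * x k)
        =ᵐ[stdGaussian p] (fun _ => (1 : ℝ)) := by
      filter_upwards [q_ne_zero_ae hp] with x hx
      rw [← Finset.sum_div, div_self hx]
    rw [integral_congr_ae hae]
    simp
  have hall : ∀ j : Fin p, (∫ x, x j * x j / ∑ k, x k * x k ∂(stdGaussian p)) = c :=
    fun j => (diag_eq j i)
  rw [Finset.sum_congr rfl (fun j _ => hall j), Finset.sum_const, Finset.card_univ,
    Fintype.card_fin, nsmul_eq_mul] at hsum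
  have hp' : (p : ℝ) ≠ 0 := Nat.cast_ne_zero.mpr hp.ne'
  field_simp at hsum ⊢
  linarith

end GQAux

/-- For `z ∼ N(0, I_p)` with `p ≥ 2` and `Σ` positive semi-definite,
`E[(zᵀ Σ z)²/(zᵀ z)²] ≤ tr(Σ²)/p + (tr Σ)²/(p(p−1))`. -/
theorem gaussian_quadratic_ratio_sq_mean {p : ℕ} (hp : 2 ≤ p)
    (S : Matrix (Fin p) (Fin p) ℝ) (hS : S.PosSemidef) :
    ∫ x, (x ⬝ᵥ (S *ᵥ x)) ^ 2 / (x ⬝ᵥ x) ^ 2 ∂(stdGaussian p)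
      ≤ (S * S).trace / p + S.trace ^ 2 / ((p : ℝ) * ((p : ℝ) - 1)) := by
  classical
  have hp0 : 0 < p := lt_of_lt_of_le two_pos hp
  set A := S * S with hA
  have hsym : Sᵀ = S := by
    have := hS.isHermitian
    rwa [Matrix.IsHermitian, Matrix.conjTranspose] at this
  -- pointwise Cauchy-Schwarz step
  have hpoint : ∀ x : Fin p → ℝ,
      (x ⬝ᵥ (S *ᵥ x)) ^ 2 / (x ⬝ᵥ x) ^ 2 ≤ x ⬝ᵥ (A *ᵥ x) / (x ⬝ᵥ x) := by
    intro x
    have hq0 : 0 ≤ x ⬝ᵥ x := Finset.sum_nonneg fun k _ => mul_self_nonneg _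
    have hvm : x ᵥ* S = S *ᵥ x := by rw [← Matrix.mulVec_transpose, hsym]
    have hAx : x ⬝ᵥ (A *ᵥ x) = (S *ᵥ x) ⬝ᵥ (S *ᵥ x) := by
      rw [hA, ← Matrix.mulVec_mulVec, Matrix.dotProduct_mulVec, hvm]
    rcases eq_or_lt_of_le hq0 with h0 | h0
    · have hx : x = 0 := by
        funext k
        have := (Finset.sum_eq_zero_iff_of_nonneg
          (fun k (_ : k ∈ Finset.univ) => mul_self_nonneg (x k))).mp h0.symm k (Finset.mem_univ k)
        exact mul_self_eq_zero.mp this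
      simp [hx]
    · have hcs : (x ⬝ᵥ (S *ᵥ x)) ^ 2 ≤ (x ⬝ᵥ x) * (x ⬝ᵥ (A *ᵥ x)) := by
        rw [hAx]
        calc (x ⬝ᵥ (S *ᵥ x)) ^ 2 = (∑ k, x k * (S *ᵥ x) k) ^ 2 := rfl
          _ ≤ (∑ k, x k ^ 2) * (∑ k, ((S *ᵥ x) k) ^ 2) :=
            Finset.sum_mul_sq_le_sq_mul_sq Finset.univ x (fun k => (S *ᵥ x) k)
          _ = (x ⬝ᵥ x) * ((S *ᵥ x) ⬝ᵥ (S *ᵥ x)) := by simp [dotProduct, sq]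
      calc (x ⬝ᵥ (S *ᵥ x)) ^ 2 / (x ⬝ᵥ x) ^ 2
          ≤ ((x ⬝ᵥ x) * (x ⬝ᵥ (A *ᵥ x))) / (x ⬝ᵥ x) ^ 2 :=
            (div_le_div_iff_of_pos_right (pow_pos h0 2)).mpr hcs
        _ = x ⬝ᵥ (A *ᵥ x) / (x ⬝ᵥ x) := by
            rw [sq, mul_div_mul_left _ _ (ne_of_gt h0)]
  -- expansion of the majorant
  have hexp : ∀ x : Fin p → ℝ, x ⬝ᵥ (A *ᵥ x) / (x ⬝ᵥ x)
      = ∑ i, ∑ j, A i j * (x i * x j / ∑ k, x k * x k) := by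
    intro x
    have h1 : x ⬝ᵥ (A *ᵥ x) = ∑ i, ∑ j, A i j * (x i * x j) := by
      simp only [dotProduct, Matrix.mulVec, Finset.mul_sum]
      exact Finset.sum_congr rfl fun i _ => Finset.sum_congr rfl fun j _ => by
        ring
    have h2 : x ⬝ᵥ x = ∑ k, x k * x k := rfl
    rw [h1, h2, Finset.sum_div]
    exact Finset.sum_congr rfl fun i _ => by
      rw [Finset.sum_div]
      exact Finset.sum_congr rfl fun j _ => by rw [mul_div_assoc]
  set C : ℝ := ∑ i, ∑ j, |A i j| with hC
  have hRb : ∀ x : Fin p → ℝ,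
      ∑ i, ∑ j, A i j * (x i * x j / ∑ k, x k * x k) ≤ C := by
    intro x
    refine Finset.sum_le_sum fun i _ => Finset.sum_le_sum fun j _ => ?_
    calc A i j * (x i * x j / ∑ k, x k * x k)
        ≤ |A i j * (x i * x j / ∑ k, x k * x k)| := le_abs_self _
      _ = |A i j| * |x i * x j / ∑ k, x k * x k| := abs_mul _ _
      _ ≤ |A i j| * 1 := by
          exact mul_le_mul_of_nonneg_left (GQAux.boundF i j x) (abs_nonneg _)
      _ = |A i j| := mul_one _
  have hIntR : Integrable
      (fun x : Fin p → ℝ => ∑ i, ∑ j, A i j * (x i * x j / ∑ k, x k * x k))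
      (stdGaussian p) :=
    integrable_finset_sum _ fun i _ => integrable_finset_sum _ fun j _ =>
      (GQAux.intF i j).const_mul _
  have hmL : Measurable (fun x : Fin p → ℝ => (x ⬝ᵥ (S *ᵥ x)) ^ 2 / (x ⬝ᵥ x) ^ 2) := by
    have m1 : Measurable (fun x : Fin p → ℝ => x ⬝ᵥ (S *ᵥ x)) := by
      show Measurable fun x : Fin p → ℝ => ∑ i, x i * ∑ j, S i j * x j
      exact Finset.measurable_sum _ fun i _ => (measurable_pi_apply i).mul
        (Finset.measurable_sum _ fun j _ => measurable_const.mul (measurable_pi_apply j))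
    have m2 : Measurable (fun x : Fin p → ℝ => x ⬝ᵥ x) := by
      show Measurable fun x : Fin p → ℝ => ∑ k, x k * x k
      exact GQAux.measQ
    exact (m1.pow_const 2).div (m2.pow_const 2)
  have hIntL : Integrable
      (fun x : Fin p → ℝ => (x ⬝ᵥ (S *ᵥ x)) ^ 2 / (x ⬝ᵥ x) ^ 2) (stdGaussian p) := by
    refine ⟨hmL.aestronglyMeasurable, ?_⟩
    refine HasFiniteIntegral.of_bounded (C := C) (ae_of_all _ fun x => ?_)
    rw [Real.norm_eq_abs, abs_of_nonneg (div_nonneg (sq_nonneg _) (sq_nonneg _))]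
    exact le_trans (le_trans (hpoint x) (le_of_eq (hexp x))) (hRb x)
  have hIR : ∫ x, (∑ i, ∑ j, A i j * (x i * x j / ∑ k, x k * x k)) ∂(stdGaussian p)
      = A.trace / p := by
    rw [integral_finset_sum Finset.univ (fun i _ => integrable_finset_sum Finset.univ fun j _ =>
      (GQAux.intF i j).const_mul (A i j))]
    have hterm : ∀ i : Fin p,
        ∫ x, (∑ j, A i j * (x i * x j / ∑ k, x k * x k)) ∂(stdGaussian p)
          = A i i / p := by
      intro i
      rw [integral_finset_sum _ (fun j _ => (GQAux.intF i j).const_mul _)]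
      have : ∀ j : Fin p, ∫ x, A i j * (x i * x j / ∑ k, x k * x k) ∂(stdGaussian p)
          = A i j * ∫ x, x i * x j / ∑ k, x k * x k ∂(stdGaussian p) :=
        fun j => integral_const_mul _ _
      simp_rw [this]
      rw [Finset.sum_eq_single i]
      · rw [GQAux.diag hp0 i]; ring
      · intro j _ hji
        rw [GQAux.offdiag (Ne.symm hji), mul_zero]
      · intro h; exact absurd (Finset.mem_univ i) h
    rw [Finset.sum_congr rfl (fun i _ => hterm i), Matrix.trace, ← Finset.sum_div]
    rfl
  calc ∫ x, (x ⬝ᵥ (S *ᵥ x)) ^ 2 / (x ⬝ᵥ x) ^ 2 ∂(stdGaussian p)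
      ≤ ∫ x, (∑ i, ∑ j, A i j * (x i * x j / ∑ k, x k * x k)) ∂(stdGaussian p) :=
        integral_mono hIntL hIntR fun x => le_trans (hpoint x) (le_of_eq (hexp x))
    _ = A.trace / p := hIR
    _ ≤ (S * S).trace / p + S.trace ^ 2 / ((p : ℝ) * ((p : ℝ) - 1)) := by
        rw [← hA]
        refine le_add_of_nonneg_right (div_nonneg (sq_nonneg _) ?_)
        have h2 : (2 : ℝ) ≤ (p : ℝ) := by exact_mod_cast hp
        nlinarith
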